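/- A function β : ℤ → ℂ satisfies (n + m)(β(m) − β(n)) + (n − m)·β(n + m) = 0 for all n, m ∈ ℤ if and only if there exist a, b ∈ ℂ such that β(n) = a·n² + b·n for all n ∈ ℤ. In particular, the space of solutions is two-dimensional, spanned by n ↦ n and n ↦ n². -/

import Mathlib

/-- degree-zero mixing 2-cocycle functions on `W_B(λ)` are exactly the
functions of the form `n ↦ a n² + b n`. -/
theorem stmt_7 (β : ℤ → ℂ) :
    (∀ n m : ℤ, ((n : ℂ) + (m : ℂ)) * (β m - β n) + ((n : ℂ) - (m : ℂ)) * β (n + m) = 0)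
      ↔ ∃ a b : ℂ, ∀ n : ℤ, β n = a * (n : ℂ) ^ 2 + b * (n : ℂ) := by
  constructor
  · intro h
    set a : ℂ := β 2 / 2 - β 1 with ha
    set b : ℂ := 2 * β 1 - β 2 / 2 with hb
    refine ⟨a, b, ?_⟩
    set g : ℤ → ℂ := fun n => β n - (a * (n : ℂ) ^ 2 + b * (n : ℂ)) with hgdef
    have hg : ∀ n m : ℤ,
        ((n : ℂ) + (m : ℂ)) * (g m - g n) + ((n : ℂ) - (m : ℂ)) * g (n + m) = 0 := by
      intro n m
      simp only [hgdef]
      push_cast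
      linear_combination h n m
    have hg0 : g 0 = 0 := by
      have h10 := hg 1 0
      simp only [Int.cast_one, Int.cast_zero] at h10
      norm_num at h10
      linear_combination h10
    have hg1 : g 1 = 0 := by simp only [hgdef]; push_cast; ring
    have hg2 : g 2 = 0 := by simp only [hgdef]; push_cast; ring
    have hgm1 : g (-1) = 0 := by
      have := hg 2 (-1)
      push_cast at this
      norm_num at this
      linear_combination this / 1 - hg1 * 3 + hg2
    have hgm2 : g (-2) = 0 := by
      have := hg 1 (-2)
      push_cast at this
      norm_num at this
      linear_combination - this + hg1 + 3 * hgm1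
    have key : ∀ n : ℕ, g (n : ℤ) = 0 ∧ g (-(n : ℤ)) = 0 := by
      intro n
      induction n with
      | zero => simpa using hg0
      | succ k ih =>
        match k, ih with
        | 0, _ => simpa using ⟨hg1, hgm1⟩
        | 1, _ => exact ⟨by exact_mod_cast hg2, by exact_mod_cast hgm2⟩
        | (m + 2), ih =>
          obtain ⟨ihp, ihn⟩ := ih
          constructor
          · -- from hg (m+2) 1 : (m+3)(g 1 - g (m+2)) + (m+1) g (m+3) = 0
            have e := hg ((m : ℤ) + 2) 1
            have hne : ((m : ℂ) + 2) - 1 ≠ 0 := by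
              have : (0:ℝ) < (m:ℝ) + 1 := by positivity
              intro hc
              have : ((m : ℂ) + 1) = 0 := by linear_combination hc
              rw [show ((m:ℂ) + 1) = ((m+1 : ℕ) : ℂ) by push_cast; ring] at this
              exact_mod_cast this
            push_cast at e ⊢
            have him : g ((m : ℤ) + 2) = 0 := by
              rw [show ((m : ℤ) + 2) = ((m + 2 : ℕ) : ℤ) by push_cast; ring]
              exact ihp
            have e2 : (((m : ℂ) + 2) - 1) * g ((m : ℤ) + 2 + 1) = 0 := by
              push_cast
              linear_combination e - ((m:ℂ) + 3) * hg1 + ((m:ℂ)+3) * him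
            have := mul_eq_zero.mp e2
            rcases this with hc | hc
            · exact absurd hc hne
            · rw [show ((m : ℕ) + 2 + 1 : ℤ) = ((m : ℤ) + 2 + 1) by push_cast; ring]
              exact hc
          · -- from hg (-(m+2)) (-1)
            have e := hg (-((m : ℤ) + 2)) (-1)
            have hne : (-((m : ℂ) + 2)) - (-1) ≠ 0 := by
              intro hc
              have : ((m : ℂ) + 1) = 0 := by linear_combination -hc
              rw [show ((m:ℂ) + 1) = ((m+1 : ℕ) : ℂ) by push_cast; ring] at this
              exact_mod_cast this
            push_cast at e ⊢
            have him : g (-((m : ℤ) + 2)) = 0 := by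
              rw [show (-((m : ℤ) + 2)) = (-((m + 2 : ℕ) : ℤ)) by push_cast; ring]
              exact ihn
            have e2 : ((-((m : ℂ) + 2)) - (-1)) * g (-((m : ℤ) + 2) + -1) = 0 := by
              push_cast
              linear_combination e - (-((m:ℂ)+2) + (-1)) * hgm1 + (-((m:ℂ)+2) + (-1)) * him
            rcases mul_eq_zero.mp e2 with hc | hc
            · exact absurd hc hne
            · rw [show (-((m : ℕ) + 2 + 1) : ℤ) = (-((m : ℤ) + 2) + -1) by push_cast; ring]
              exact hc
    intro n
    have : g n = 0 := by
      rcases le_or_gt 0 n with hn | hn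
      · lift n to ℕ using hn
        exact (key n).1
      · obtain ⟨k, rfl⟩ : ∃ k : ℕ, n = -(k : ℤ) := ⟨n.natAbs, by omega⟩
        exact (key k).2
    simp only [hgdef] at this
    linear_combination this
  · rintro ⟨a, b, hf⟩ n m
    rw [hf, hf, hf]
    push_cast
    ring
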